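/- Consider the uncertain unicycle with unknown constants b₁, b₂ > 0 under the adaptive feedback and update laws, where V : {ρ>0}×ℝ² → [0,∞) is any nonnegative C¹ function. Along every closed-loop solution on [0,T) with ρ(t) > 0, for all t ∈ [0,T): ln(1 + n(V(t))) + c₁ (ε̃₁(t)² + ε̃₂(t)²) ≤ ln(1 + n(V(0))) + c₂ (ε̃₁(0)² + ε̃₂(0)²), where V(t) = V(ρ(t),δ(t),γ(t)), ε̃ᵢ(t) = 1/bᵢ − ε̂ᵢ(t), c₁ = min{b₁/(2μ₁), b₂/(2μ₂)}, and c₂ = max{b₁/(2μ₁), b₂/(2μ₂)}. (This is the uniform-boundedness estimate of the adaptive stabilization theorem.) -/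

import Mathlib

/-!
STATEMENT 12: Uncertain unicycle under the adaptive feedback and update laws:
uniform boundedness estimate — along every closed-loop solution on [0,T) with
ρ > 0, for all t ∈ [0,T):
ln(1+n(V(t))) + c₁(ε̃₁(t)² + ε̃₂(t)²) ≤ ln(1+n(V(0))) + c₂(ε̃₁(0)² + ε̃₂(0)²),
with c₁ = min{b₁/2μ₁, b₂/2μ₂}, c₂ = max{b₁/2μ₁, b₂/2μ₂}.
-/
noncomputable section

open Real Set Filter

/-- The continuous linear map (u,w,x) ↦ aρ·u + aδ·w + aγ·x, the total derivative
of a function of (ρ,δ,γ) with partial derivatives (aρ,aδ,aγ). -/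
def gradMap (aρ aδ aγ : ℝ) : (ℝ × ℝ × ℝ) →L[ℝ] ℝ :=
  aρ • ContinuousLinearMap.fst ℝ ℝ (ℝ × ℝ)
    + aδ • ((ContinuousLinearMap.fst ℝ ℝ ℝ).comp (ContinuousLinearMap.snd ℝ ℝ (ℝ × ℝ)))
    + aγ • ((ContinuousLinearMap.snd ℝ ℝ ℝ).comp (ContinuousLinearMap.snd ℝ ℝ (ℝ × ℝ)))

/-- ν₁ = −(∂V/∂ρ) ρ cos γ + (∂V/∂δ + ∂V/∂γ) sin γ at the state p = (ρ,δ,γ). -/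
def nuOne (Vρ Vδ Vγ : ℝ × ℝ × ℝ → ℝ) (p : ℝ × ℝ × ℝ) : ℝ :=
  -(Vρ p) * p.1 * Real.cos p.2.2 + (Vδ p + Vγ p) * Real.sin p.2.2

/-- ν₂ = −∂V/∂γ. -/
def nuTwo (Vγ : ℝ × ℝ × ℝ → ℝ) (p : ℝ × ℝ × ℝ) : ℝ := -(Vγ p)

lemma gradMap_apply' (a b c u w x : ℝ) : gradMap a b c (u, w, x) = a*u + b*w + c*x := by
  simp [gradMap]

lemma deriv_nonneg_of_strictMonoOn' (n n' : ℝ → ℝ)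
    (hn : ∀ s : ℝ, 0 ≤ s → HasDerivAt n (n' s) s)
    (hnmono : StrictMonoOn n (Set.Ici 0)) : ∀ s : ℝ, 0 ≤ s → 0 ≤ n' s := by
  intro s hs
  have hd : HasDerivWithinAt n (n' s) (Ioi s) s := (hn s hs).hasDerivWithinAt
  have hslope := hasDerivWithinAt_iff_tendsto_slope.mp hd
  have hIoi : (Ioi s) \ {s} = Ioi s := Set.diff_singleton_eq_self (by simp)
  rw [hIoi] at hslope
  refine ge_of_tendsto hslope ?_
  filter_upwards [self_mem_nhdsWithin] with x hx
  have hxs : s < x := hx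
  rw [slope_def_field]
  apply div_nonneg _ (by linarith)
  have := hnmono hs (le_trans hs hxs.le) hxs
  linarith

theorem adaptive_uniform_boundedness
    (b₁ b₂ μ₁ μ₂ : ℝ) (hb₁ : 0 < b₁) (hb₂ : 0 < b₂) (hμ₁ : 0 < μ₁) (hμ₂ : 0 < μ₂)
    (V Vρ Vδ Vγ : ℝ × ℝ × ℝ → ℝ) (n n' : ℝ → ℝ)
    -- V is a nonnegative C¹ function on {ρ > 0} × ℝ² with partials Vρ, Vδ, Vγ
    (hV : ∀ p : ℝ × ℝ × ℝ, 0 < p.1 → HasFDerivAt V (gradMap (Vρ p) (Vδ p) (Vγ p)) p)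
    (hVnonneg : ∀ p : ℝ × ℝ × ℝ, 0 < p.1 → 0 ≤ V p)
    -- n is a C¹, strictly increasing normalization function with n(0) = 0
    (hn : ∀ s : ℝ, 0 ≤ s → HasDerivAt n (n' s) s)
    (hn0 : n 0 = 0) (hnmono : StrictMonoOn n (Set.Ici 0))
    (hnnonneg : ∀ s : ℝ, 0 ≤ s → 0 ≤ n s)
    -- the closed-loop solution on [0,T) with feedback v = −ε̂₁ ρ ν₁, ω = −ε̂₂ ν₂
    (T : ℝ) (hT : 0 < T) (ρ δ γ e₁ e₂ : ℝ → ℝ)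
    (hρpos : ∀ t ∈ Set.Ico (0 : ℝ) T, 0 < ρ t)
    (hρ : ∀ t ∈ Set.Ico (0 : ℝ) T, HasDerivAt ρ
      (-(b₁ * (-(e₁ t) * ρ t * nuOne Vρ Vδ Vγ (ρ t, δ t, γ t)))
        * Real.cos (γ t)) t)
    (hδ : ∀ t ∈ Set.Ico (0 : ℝ) T, HasDerivAt δ
      (b₁ * ((-(e₁ t) * ρ t * nuOne Vρ Vδ Vγ (ρ t, δ t, γ t)) / ρ t)
        * Real.sin (γ t)) t)
    (hγ : ∀ t ∈ Set.Ico (0 : ℝ) T, HasDerivAt γ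
      (b₁ * ((-(e₁ t) * ρ t * nuOne Vρ Vδ Vγ (ρ t, δ t, γ t)) / ρ t)
          * Real.sin (γ t)
        - b₂ * (-(e₂ t) * nuTwo Vγ (ρ t, δ t, γ t))) t)
    -- the update laws
    (he₁ : ∀ t ∈ Set.Ico (0 : ℝ) T, HasDerivAt e₁
      (μ₁ * (n' (V (ρ t, δ t, γ t)) / (1 + n (V (ρ t, δ t, γ t))))
        * nuOne Vρ Vδ Vγ (ρ t, δ t, γ t) ^ 2) t)
    (he₂ : ∀ t ∈ Set.Ico (0 : ℝ) T, HasDerivAt e₂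
      (μ₂ * (n' (V (ρ t, δ t, γ t)) / (1 + n (V (ρ t, δ t, γ t))))
        * nuTwo Vγ (ρ t, δ t, γ t) ^ 2) t) :
    ∀ t ∈ Set.Ico (0 : ℝ) T,
      Real.log (1 + n (V (ρ t, δ t, γ t)))
          + min (b₁ / (2 * μ₁)) (b₂ / (2 * μ₂))
            * ((1 / b₁ - e₁ t) ^ 2 + (1 / b₂ - e₂ t) ^ 2)
        ≤ Real.log (1 + n (V (ρ 0, δ 0, γ 0)))
          + max (b₁ / (2 * μ₁)) (b₂ / (2 * μ₂))
            * ((1 / b₁ - e₁ 0) ^ 2 + (1 / b₂ - e₂ 0) ^ 2) := by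

  set W : ℝ → ℝ := fun s => Real.log (1 + n (V (ρ s, δ s, γ s)))
      + b₁/(2*μ₁) * (1/b₁ - e₁ s)^2 + b₂/(2*μ₂) * (1/b₂ - e₂ s)^2 with hWdef
  have hn'nn := deriv_nonneg_of_strictMonoOn' n n' hn hnmono
  have key : ∀ s ∈ Set.Ico (0:ℝ) T, HasDerivAt W
      (-(n' (V (ρ s, δ s, γ s)) / (1 + n (V (ρ s, δ s, γ s)))) *
        (nuOne Vρ Vδ Vγ (ρ s, δ s, γ s)^2 + nuTwo Vγ (ρ s, δ s, γ s)^2)) s := by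
    intro s hs
    have hρs := hρpos s hs
    have hρne : ρ s ≠ 0 := ne_of_gt hρs
    have hVnn : 0 ≤ V (ρ s, δ s, γ s) := hVnonneg _ hρs
    have hnVnn : 0 ≤ n (V (ρ s, δ s, γ s)) := hnnonneg _ hVnn
    have hpos : (0:ℝ) < 1 + n (V (ρ s, δ s, γ s)) := by linarith
    have hP : HasDerivAt (fun u => (ρ u, δ u, γ u))
        ((-(b₁ * (-(e₁ s) * ρ s * nuOne Vρ Vδ Vγ (ρ s, δ s, γ s))) * Real.cos (γ s),
          (b₁ * ((-(e₁ s) * ρ s * nuOne Vρ Vδ Vγ (ρ s, δ s, γ s)) / ρ s) * Real.sin (γ s),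
           b₁ * ((-(e₁ s) * ρ s * nuOne Vρ Vδ Vγ (ρ s, δ s, γ s)) / ρ s) * Real.sin (γ s)
             - b₂ * (-(e₂ s) * nuTwo Vγ (ρ s, δ s, γ s))))) s :=
      HasDerivAt.prodMk (hρ s hs) (HasDerivAt.prodMk (hδ s hs) (hγ s hs))
    have hVc := (hV _ hρs).comp_hasDerivAt s hP
    have hVc2 : HasDerivAt (fun u => V (ρ u, δ u, γ u))
        (-(b₁ * e₁ s) * nuOne Vρ Vδ Vγ (ρ s, δ s, γ s)^2
          - (b₂ * e₂ s) * nuTwo Vγ (ρ s, δ s, γ s)^2) s := by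
      refine HasDerivAt.congr_deriv hVc ?_
      rw [gradMap_apply']
      simp only [nuOne, nuTwo]
      field_simp
      ring
    have hnV : HasDerivAt (fun u => n (V (ρ u, δ u, γ u)))
        (n' (V (ρ s, δ s, γ s)) * (-(b₁ * e₁ s) * nuOne Vρ Vδ Vγ (ρ s, δ s, γ s)^2
          - (b₂ * e₂ s) * nuTwo Vγ (ρ s, δ s, γ s)^2)) s :=
      (hn _ hVnn).comp s hVc2
    have hone : HasDerivAt (fun u => 1 + n (V (ρ u, δ u, γ u)))
        (n' (V (ρ s, δ s, γ s)) * (-(b₁ * e₁ s) * nuOne Vρ Vδ Vγ (ρ s, δ s, γ s)^2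
          - (b₂ * e₂ s) * nuTwo Vγ (ρ s, δ s, γ s)^2)) s := by
      exact hnV.const_add 1
    have hlog := hone.log (ne_of_gt hpos)
    have hsq1 : HasDerivAt (fun u => (1/b₁ - e₁ u)^2)
        (2 * (1/b₁ - e₁ s) * (0 - (μ₁ * (n' (V (ρ s, δ s, γ s)) / (1 + n (V (ρ s, δ s, γ s))))
          * nuOne Vρ Vδ Vγ (ρ s, δ s, γ s) ^ 2))) s := by
      have h := ((hasDerivAt_const s ((1:ℝ)/b₁)).sub (he₁ s hs)).pow 2
      refine HasDerivAt.congr_deriv h ?_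
      simp only [Pi.sub_apply]
      ring
    have hsq2 : HasDerivAt (fun u => (1/b₂ - e₂ u)^2)
        (2 * (1/b₂ - e₂ s) * (0 - (μ₂ * (n' (V (ρ s, δ s, γ s)) / (1 + n (V (ρ s, δ s, γ s))))
          * nuTwo Vγ (ρ s, δ s, γ s) ^ 2))) s := by
      have h := ((hasDerivAt_const s ((1:ℝ)/b₂)).sub (he₂ s hs)).pow 2
      refine HasDerivAt.congr_deriv h ?_
      simp only [Pi.sub_apply]
      ring
    have hsum := (hlog.add ((hsq1.const_mul (b₁/(2*μ₁))).add
      (hsq2.const_mul (b₂/(2*μ₂))))) 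
    have hW : HasDerivAt W
        (n' (V (ρ s, δ s, γ s)) * (-(b₁ * e₁ s) * nuOne Vρ Vδ Vγ (ρ s, δ s, γ s)^2
            - (b₂ * e₂ s) * nuTwo Vγ (ρ s, δ s, γ s)^2) / (1 + n (V (ρ s, δ s, γ s)))
          + (b₁/(2*μ₁) * (2 * (1/b₁ - e₁ s) * (0 - (μ₁ * (n' (V (ρ s, δ s, γ s)) / (1 + n (V (ρ s, δ s, γ s))))
              * nuOne Vρ Vδ Vγ (ρ s, δ s, γ s) ^ 2)))
            + b₂/(2*μ₂) * (2 * (1/b₂ - e₂ s) * (0 - (μ₂ * (n' (V (ρ s, δ s, γ s)) / (1 + n (V (ρ s, δ s, γ s))))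
              * nuTwo Vγ (ρ s, δ s, γ s) ^ 2))))) s := by
      refine HasDerivAt.congr_of_eventuallyEq hsum (Filter.Eventually.of_forall fun y => ?_)
      simp only [hWdef, Pi.add_apply]
      ring
    convert hW using 1
    field_simp
    ring
  have hconv : Convex ℝ (Set.Ico (0:ℝ) T) := convex_Ico _ _
  have hcont : ContinuousOn W (Set.Ico 0 T) :=
    fun s hs => ((key s hs).continuousAt).continuousWithinAt
  have hdiff : DifferentiableOn ℝ W (interior (Set.Ico (0:ℝ) T)) := by
    rw [interior_Ico]
    exact fun s hs => ((key s (Ioo_subset_Ico_self hs)).differentiableAt).differentiableWithinAt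
  have hderiv : ∀ s ∈ interior (Set.Ico (0:ℝ) T), deriv W s ≤ 0 := by
    rw [interior_Ico]
    intro s hs
    have hs' : s ∈ Set.Ico (0:ℝ) T := Ioo_subset_Ico_self hs
    rw [(key s hs').deriv]
    have hVnn : 0 ≤ V (ρ s, δ s, γ s) := hVnonneg _ (hρpos s hs')
    have hQ : 0 ≤ n' (V (ρ s, δ s, γ s)) / (1 + n (V (ρ s, δ s, γ s))) :=
      div_nonneg (hn'nn _ hVnn) (by have := hnnonneg _ hVnn; linarith)
    have h2 : 0 ≤ nuOne Vρ Vδ Vγ (ρ s, δ s, γ s)^2 + nuTwo Vγ (ρ s, δ s, γ s)^2 := by positivity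
    nlinarith [mul_nonneg hQ h2]
  have hanti := antitoneOn_of_deriv_nonpos hconv hcont hdiff hderiv
  intro t ht
  have h0 : (0:ℝ) ∈ Set.Ico (0:ℝ) T := ⟨le_refl 0, hT⟩
  have hWle : W t ≤ W 0 := hanti h0 ht ht.1
  simp only [hWdef] at hWle
  have hA : min (b₁ / (2 * μ₁)) (b₂ / (2 * μ₂)) ≤ b₁ / (2 * μ₁) := min_le_left _ _
  have hB : min (b₁ / (2 * μ₁)) (b₂ / (2 * μ₂)) ≤ b₂ / (2 * μ₂) := min_le_right _ _
  have hC : b₁ / (2 * μ₁) ≤ max (b₁ / (2 * μ₁)) (b₂ / (2 * μ₂)) := le_max_left _ _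
  have hD : b₂ / (2 * μ₂) ≤ max (b₁ / (2 * μ₁)) (b₂ / (2 * μ₂)) := le_max_right _ _
  nlinarith [mul_nonneg (sub_nonneg.2 hA) (sq_nonneg (1/b₁ - e₁ t)),
    mul_nonneg (sub_nonneg.2 hB) (sq_nonneg (1/b₂ - e₂ t)),
    mul_nonneg (sub_nonneg.2 hC) (sq_nonneg (1/b₁ - e₁ 0)),
    mul_nonneg (sub_nonneg.2 hD) (sq_nonneg (1/b₂ - e₂ 0))]

end
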